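/- Let (X,T) be a compact Hausdorff WAP dynamical system with a transitive point x*. Then (X,T) is coalescent: every continuous surjection π : X → X with π∘T = T∘π is injective, and hence a homeomorphism conjugating T with itself. -/

import Mathlib

open Filter Topology

/-- The `n`-th iterate (for `n : ℤ`) of a homeomorphism `T`. -/
def hIter {X : Type*} [TopologicalSpace X] (T : X ≃ₜ X) (n : ℤ) : X → X :=
  fun x => (T.toEquiv ^ n) x

/-- The enveloping semigroup of `(X,T)`: the closure of `{Tⁿ : n ∈ ℤ}` in `X → X` with
the product (pointwise convergence) topology. -/
def envSG {X : Type*} [TopologicalSpace X] (T : X ≃ₜ X) : Set (X → X) :=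
  closure (Set.range (hIter T))

/-- A map commuting with `T` commutes with all integer powers of `T`. -/
lemma comm_zpow {X : Type*} [TopologicalSpace X] (T : X ≃ₜ X) (g : X → X)
    (hg : ∀ x, g (T x) = T (g x)) :
    ∀ (n : ℤ) (x : X), g ((T.toEquiv ^ n) x) = (T.toEquiv ^ n) (g x) := by
  have hg' : ∀ x, g (T.symm x) = T.symm (g x) := by
    intro x
    have h1 := hg (T.symm x)
    rw [T.apply_symm_apply] at h1
    have := congrArg T.symm h1
    rw [T.symm_apply_apply] at this; exact this.symm
  intro n
  induction n using Int.induction_on with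
  | zero => intro x; simp
  | succ k ih =>
    intro x
    have h1 : (T.toEquiv ^ ((k : ℤ) + 1)) x = (T.toEquiv ^ (k : ℤ)) (T x) := by
      rw [zpow_add_one]; rfl
    have h2 : (T.toEquiv ^ ((k : ℤ) + 1)) (g x) = (T.toEquiv ^ (k : ℤ)) (T (g x)) := by
      rw [zpow_add_one]; rfl
    rw [h1, h2, ih (T x), hg x]
  | pred k ih =>
    intro x
    have h1 : (T.toEquiv ^ (-(k : ℤ) - 1)) x = (T.toEquiv ^ (-(k : ℤ))) (T.symm x) := by
      rw [zpow_sub_one]; rfl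
    have h2 : (T.toEquiv ^ (-(k : ℤ) - 1)) (g x) = (T.toEquiv ^ (-(k : ℤ))) (T.symm (g x)) := by
      rw [zpow_sub_one]; rfl
    rw [h1, h2, ih (T.symm x), hg' x]

/-- Any continuous map commuting with `T` commutes with all elements of the
enveloping semigroup. -/
lemma comm_env {X : Type*} [TopologicalSpace X] [T2Space X] (T : X ≃ₜ X) (g : X → X)
    (hgc : Continuous g) (hg : ∀ x, g (T x) = T (g x)) :
    ∀ p ∈ envSG T, ∀ x, g (p x) = p (g x) := by
  intro p hp x
  have hS : IsClosed {f : X → X | g (f x) = f (g x)} :=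
    isClosed_eq (hgc.comp (continuous_apply x)) (continuous_apply (g x))
  have hsub : Set.range (hIter T) ⊆ {f : X → X | g (f x) = f (g x)} := by
    rintro f ⟨n, rfl⟩
    exact comm_zpow T g hg n x
  exact hS.closure_subset_iff.mpr hsub hp

theorem stmt3 {X : Type*} [TopologicalSpace X] [CompactSpace X] [T2Space X] [Nonempty X]
    (T : X ≃ₜ X) (xs : X) (hxs : Dense (Set.range fun n : ℤ => hIter T n xs))
    (hWAP : ∀ p ∈ envSG T, Continuous p)
    (π : X → X) (hcont : Continuous π) (hsurj : Function.Surjective π)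
    (hcomm : ∀ x : X, π (T x) = T (π x)) :
    Function.Injective π ∧ ∃ h : X ≃ₜ X, ⇑h = π ∧ ∀ x : X, h (T x) = T (h x) := by
  obtain ⟨y, hy⟩ := hsurj xs
  -- the evaluation at xs maps the enveloping semigroup onto X
  have hcompact : IsCompact (envSG T) := isClosed_closure.isCompact
  have hev : Continuous fun f : X → X => f xs := continuous_apply xs
  have himg : IsClosed ((fun f : X → X => f xs) '' envSG T) :=
    (hcompact.image hev).isClosed
  have hrange : Set.range (fun n : ℤ => hIter T n xs) ⊆
      (fun f : X → X => f xs) '' envSG T := by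
    rintro z ⟨n, rfl⟩
    exact ⟨hIter T n, subset_closure (Set.mem_range_self n), rfl⟩
  have hall : (fun f : X → X => f xs) '' envSG T = Set.univ := by
    have := hxs.mono hrange
    rw [← himg.closure_eq]
    exact this.closure_eq
  obtain ⟨p, hpE, hp⟩ : ∃ p ∈ envSG T, p xs = y := by
    have : y ∈ (fun f : X → X => f xs) '' envSG T := by rw [hall]; trivial
    obtain ⟨p, hpE, hpx⟩ := this
    exact ⟨p, hpE, hpx⟩
  have hpc : Continuous p := hWAP p hpE
  -- π commutes with p
  have hπp : ∀ x, π (p x) = p (π x) := comm_env T π hcont hcomm p hpE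
  -- T commutes with p
  have hTp : ∀ x, (T : X → X) (p x) = p (T x) :=
    comm_env T T T.continuous (fun _ => rfl) p hpE
  -- σ := π ∘ p equals id on the dense orbit
  have hσ : π ∘ p = id := by
    apply Continuous.ext_on hxs (hcont.comp hpc) continuous_id
    rintro z ⟨n, rfl⟩
    show π (p (hIter T n xs)) = hIter T n xs
    have h1 : p (hIter T n xs) = (T.toEquiv ^ n) y := by
      have := comm_zpow T p (fun x => (hTp x).symm) n xs
      simpa [hIter, hp] using this
    have h2 : π ((T.toEquiv ^ n) y) = (T.toEquiv ^ n) xs := by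
      rw [comm_zpow T π hcomm n y, hy]
    rw [h1]
    exact h2
  have hright : ∀ x, π (p x) = x := fun x => congrFun hσ x
  have hleft : ∀ x, p (π x) = x := fun x => by rw [← hπp x, hright x]
  have hinj : Function.Injective π := Function.LeftInverse.injective hleft
  refine ⟨hinj, ?_⟩
  let e : X ≃ X := ⟨π, p, hleft, hright⟩
  have hce : Continuous e := hcont
  exact ⟨hce.homeoOfEquivCompactToT2, rfl, hcomm⟩
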